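/- (Variational lemma) Let σ be a distribution on size-K multisets over a finite type X, with K ≥ 1. Then among all distributions ω on X, the KL divergence D_KL(σ, Multinomial[K](ω)) is minimized at ω = flrn≫σ, the distribution x ↦ (1/K)·Σ_φ σ(φ)·φ(x). -/

import Mathlib

open Finset

noncomputable def validity {X : Type*} [Fintype X] (ω p : X → ℝ) : ℝ := ∑ x, ω x * p x
noncomputable def updateD {X : Type*} [Fintype X] (ω p : X → ℝ) : X → ℝ :=
  fun x => ω x * p x / validity ω p
noncomputable def push {X Y : Type*} [Fintype X] (c : X → Y → ℝ) (ω : X → ℝ) : Y → ℝ :=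
  fun y => ∑ x, ω x * c x y
noncomputable def pull {X Y : Type*} [Fintype Y] (c : X → Y → ℝ) (q : Y → ℝ) : X → ℝ :=
  fun x => ∑ y, c x y * q y
noncomputable def dagger {X Y : Type*} [Fintype X] (c : X → Y → ℝ) (ω : X → ℝ) : Y → X → ℝ :=
  fun y x => ω x * c x y / push c ω y

def IsDist {X : Type*} [Fintype X] (ω : X → ℝ) : Prop :=
  (∀ x, 0 ≤ ω x) ∧ ∑ x, ω x = 1
def IsChannel {X Y : Type*} [Fintype Y] (c : X → Y → ℝ) : Prop :=
  ∀ x, IsDist (c x)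
def IsPred {X : Type*} (p : X → ℝ) : Prop := ∀ x, 0 ≤ p x ∧ p x ≤ 1

noncomputable def coefm {X : Type*} [Fintype X] [DecidableEq X] (K : ℕ) (φ : Sym X K) : ℝ :=
  (K.factorial : ℝ) / ∏ x, (((φ : Multiset X).count x).factorial : ℝ)
noncomputable def multinom {X : Type*} [Fintype X] [DecidableEq X] (K : ℕ) (ω : X → ℝ)
    (φ : Sym X K) : ℝ :=
  coefm K φ * ∏ x, ω x ^ ((φ : Multiset X).count x)
noncomputable def flrn {X : Type*} [DecidableEq X] (K : ℕ) (φ : Sym X K) : X → ℝ :=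
  fun x => ((φ : Multiset X).count x : ℝ) / K
def acc {X : Type*} {K : ℕ} (v : Fin K → X) : Sym X K :=
  ⟨Multiset.map v Finset.univ.val, by simp⟩
noncomputable def arr {X : Type*} [Fintype X] [DecidableEq X] {K : ℕ} (φ : Sym X K) :
    (Fin K → X) → ℝ :=
  fun v => if acc v = φ then 1 / coefm K φ else 0
noncomputable def Mchan {X Y : Type*} [Fintype X] [DecidableEq X] [Fintype Y] [DecidableEq Y]
    {K : ℕ} (c : X → Y → ℝ) : Sym X K → Sym Y K → ℝ :=
  fun φ ψ => ∑ v : Fin K → X, arr φ v *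
    ∑ w : Fin K → Y, (∏ i, c (v i) (w i)) * (if acc w = ψ then 1 else 0)
open Classical in
noncomputable def klE {Z : Type*} [Fintype Z] (ω ρ : Z → ℝ) : EReal :=
  if ∀ z, ω z ≠ 0 → ρ z ≠ 0 then ((∑ z, ω z * Real.log (ω z / ρ z) : ℝ) : EReal) else ⊤

section Aux
variable {X : Type*} [Fintype X] [DecidableEq X]

lemma sum_count_real {K : ℕ} (φ : Sym X K) :
    ∑ x : X, (((φ : Multiset X).count x : ℝ)) = K := by
  rw [← Nat.cast_sum]
  norm_cast
  rw [Multiset.sum_count_eq_card (fun a _ => Finset.mem_univ a)]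
  exact φ.2

lemma coefm_pos {K : ℕ} (φ : Sym X K) : 0 < coefm K φ := by
  apply div_pos
  · exact_mod_cast Nat.factorial_pos K
  · exact Finset.prod_pos fun x _ => by exact_mod_cast Nat.factorial_pos _

lemma gibbs (ρ ω : X → ℝ) (hρ : IsDist ρ) (hω : IsDist ω)
    (h : ∀ x, ρ x ≠ 0 → ω x ≠ 0) :
    ∑ x, ρ x * Real.log (ω x) ≤ ∑ x, ρ x * Real.log (ρ x) := by
  have key : ∀ x : X, ρ x * Real.log (ω x) - ρ x * Real.log (ρ x) ≤ ω x - ρ x := by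
    intro x
    rcases eq_or_lt_of_le (hρ.1 x) with h0 | hpos
    · simp [← h0, hω.1 x]
    · have hωx : 0 < ω x := lt_of_le_of_ne (hω.1 x) (Ne.symm (h x (ne_of_gt hpos)))
      have hlog := Real.log_le_sub_one_of_pos (div_pos hωx hpos)
      rw [Real.log_div (ne_of_gt hωx) (ne_of_gt hpos)] at hlog
      have h2 := mul_le_mul_of_nonneg_left hlog (le_of_lt hpos)
      calc ρ x * Real.log (ω x) - ρ x * Real.log (ρ x)
          = ρ x * (Real.log (ω x) - Real.log (ρ x)) := by ring
        _ ≤ ρ x * (ω x / ρ x - 1) := h2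
        _ = ω x - ρ x := by field_simp
  have hsum : ∑ x, (ρ x * Real.log (ω x) - ρ x * Real.log (ρ x)) ≤ ∑ x, (ω x - ρ x) :=
    Finset.sum_le_sum fun x _ => key x
  rw [Finset.sum_sub_distrib, Finset.sum_sub_distrib, hρ.2, hω.2] at hsum
  linarith

lemma log_decomp {K : ℕ} (σ : Sym X K → ℝ) (p : X → ℝ)
    (h : ∀ φ, σ φ ≠ 0 → multinom K p φ ≠ 0) :
    ∑ φ : Sym X K, σ φ * Real.log (multinom K p φ)
      = ∑ φ : Sym X K, σ φ * Real.log (coefm K φ)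
        + ∑ x : X, (∑ φ : Sym X K, σ φ * ((φ : Multiset X).count x : ℝ)) * Real.log (p x) := by
  have step : ∀ φ : Sym X K, σ φ * Real.log (multinom K p φ)
      = σ φ * Real.log (coefm K φ)
        + σ φ * ∑ x : X, ((φ : Multiset X).count x : ℝ) * Real.log (p x) := by
    intro φ
    rcases eq_or_ne (σ φ) 0 with h0 | h0
    · simp [h0]
    · have hM := h φ h0
      have hprod : (∏ x, p x ^ ((φ : Multiset X).count x)) ≠ 0 := by
        intro hz
        exact hM (by rw [multinom, hz, mul_zero])
      have hfac : ∀ x ∈ Finset.univ, p x ^ ((φ : Multiset X).count x) ≠ 0 :=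
        fun x _ => Finset.prod_ne_zero_iff.mp hprod x (Finset.mem_univ x)
      rw [multinom, Real.log_mul (ne_of_gt (coefm_pos φ)) hprod,
        Real.log_prod hfac, mul_add]
      congr 1
      congr 1
      exact Finset.sum_congr rfl fun x _ => Real.log_pow _ _
  calc ∑ φ : Sym X K, σ φ * Real.log (multinom K p φ)
      = ∑ φ : Sym X K, (σ φ * Real.log (coefm K φ)
        + σ φ * ∑ x : X, ((φ : Multiset X).count x : ℝ) * Real.log (p x)) :=
        Finset.sum_congr rfl fun φ _ => step φ
    _ = _ := by
        rw [Finset.sum_add_distrib]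
        congr 1
        simp only [Finset.mul_sum]
        rw [Finset.sum_comm]
        exact Finset.sum_congr rfl fun x _ => by
          rw [Finset.sum_mul]; exact Finset.sum_congr rfl fun φ _ => by ring

end Aux


theorem stmt19 {X : Type*} [Fintype X] [DecidableEq X] (K : ℕ) (hK : 1 ≤ K)
    (σ : Sym X K → ℝ) (hσ : IsDist σ) :
    ∀ ω : X → ℝ, IsDist ω →
      klE σ (multinom K (fun x => (1 / (K : ℝ)) * ∑ φ : Sym X K, σ φ * ((φ : Multiset X).count x : ℝ)))
        ≤ klE σ (multinom K ω) := by
  intro ω hω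
  set ρ : X → ℝ := fun x => (1 / (K : ℝ)) * ∑ φ : Sym X K, σ φ * ((φ : Multiset X).count x : ℝ)
    with hρdef
  have hKpos : (0 : ℝ) < K := by exact_mod_cast hK
  -- ρ is a distribution
  have hρnn : ∀ x, 0 ≤ ρ x := fun x =>
    mul_nonneg (by positivity) (Finset.sum_nonneg fun φ _ =>
      mul_nonneg (hσ.1 φ) (Nat.cast_nonneg _))
  have hρsum : ∑ x, ρ x = 1 := by
    simp only [hρdef, ← Finset.mul_sum]
    rw [Finset.sum_comm]
    have : ∀ φ : Sym X K, ∑ x : X, σ φ * ((φ : Multiset X).count x : ℝ) = σ φ * K := by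
      intro φ; rw [← Finset.mul_sum, sum_count_real]
    rw [Finset.sum_congr rfl fun φ _ => this φ, ← Finset.sum_mul, hσ.2]
    field_simp
  have hρdist : IsDist ρ := ⟨hρnn, hρsum⟩
  -- K·ρ x = ∑ φ, σ φ * count
  have hKρ : ∀ x, ∑ φ : Sym X K, σ φ * ((φ : Multiset X).count x : ℝ) = K * ρ x := by
    intro x; rw [hρdef]; field_simp
  -- σ φ ≠ 0 and count x φ > 0 implies ρ x > 0
  have hρpos : ∀ (φ : Sym X K) (x : X), σ φ ≠ 0 → (φ : Multiset X).count x ≠ 0 → 0 < ρ x := by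
    intro φ x hσφ hc
    have hσφpos : 0 < σ φ := lt_of_le_of_ne (hσ.1 φ) (Ne.symm hσφ)
    have hcpos : (0 : ℝ) < ((φ : Multiset X).count x : ℝ) := by
      exact_mod_cast Nat.pos_of_ne_zero hc
    have hterm : 0 < σ φ * ((φ : Multiset X).count x : ℝ) := mul_pos hσφpos hcpos
    have hle : σ φ * ((φ : Multiset X).count x : ℝ)
        ≤ ∑ ψ : Sym X K, σ ψ * ((ψ : Multiset X).count x : ℝ) :=
      Finset.single_le_sum (f := fun ψ : Sym X K => σ ψ * ((ψ : Multiset X).count x : ℝ))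
        (fun ψ _ => mul_nonneg (hσ.1 ψ) (Nat.cast_nonneg _)) (Finset.mem_univ φ)
    have : 0 < ∑ ψ : Sym X K, σ ψ * ((ψ : Multiset X).count x : ℝ) := lt_of_lt_of_le hterm hle
    exact mul_pos (by positivity) this
  -- multinom K ρ φ ≠ 0 whenever σ φ ≠ 0
  have hMρ : ∀ φ : Sym X K, σ φ ≠ 0 → multinom K ρ φ ≠ 0 := by
    intro φ hσφ
    rw [multinom]
    apply mul_ne_zero (ne_of_gt (coefm_pos φ))
    rw [Finset.prod_ne_zero_iff]
    intro x _
    rcases Nat.eq_zero_or_pos ((φ : Multiset X).count x) with hc | hc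
    · rw [hc, pow_zero]; norm_num
    · exact pow_ne_zero _ (ne_of_gt (hρpos φ x hσφ hc.ne'))
  -- case on RHS finiteness
  by_cases hωfin : ∀ φ : Sym X K, σ φ ≠ 0 → multinom K ω φ ≠ 0
  · -- both finite
    simp only [klE]
    rw [if_pos hMρ, if_pos hωfin]
    rw [EReal.coe_le_coe_iff]
    -- decompose logs
    have hre : ∀ (p : X → ℝ), (∀ φ, σ φ ≠ 0 → multinom K p φ ≠ 0) →
        ∑ φ : Sym X K, σ φ * Real.log (σ φ / multinom K p φ)
          = ∑ φ : Sym X K, σ φ * Real.log (σ φ)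
            - ∑ φ : Sym X K, σ φ * Real.log (multinom K p φ) := by
      intro p hp
      rw [← Finset.sum_sub_distrib]
      apply Finset.sum_congr rfl
      intro φ _
      rcases eq_or_ne (σ φ) 0 with h0 | h0
      · simp [h0]
      · rw [Real.log_div h0 (hp φ h0)]; ring
    rw [hre ρ hMρ, hre ω hωfin, log_decomp σ ρ hMρ, log_decomp σ ω hωfin]
    have hswap : ∀ (p : X → ℝ),
        ∑ x : X, (∑ φ : Sym X K, σ φ * ((φ : Multiset X).count x : ℝ)) * Real.log (p x)
          = K * ∑ x : X, ρ x * Real.log (p x) := by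
      intro p
      rw [Finset.mul_sum]
      exact Finset.sum_congr rfl fun x _ => by rw [hKρ x]; ring
    rw [hswap ρ, hswap ω]
    have hGibbs : ∑ x, ρ x * Real.log (ω x) ≤ ∑ x, ρ x * Real.log (ρ x) := by
      apply gibbs ρ ω hρdist hω
      intro x hρx
      -- ρ x ≠ 0 means some φ with σ φ ≠ 0 and count ≠ 0, then ω x ≠ 0 from multinom ≠ 0
      intro hωx
      -- find φ
      have : ∃ φ : Sym X K, σ φ ≠ 0 ∧ (φ : Multiset X).count x ≠ 0 := by
        by_contra hno
        push_neg at hno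
        apply hρx
        rw [hρdef]
        simp only
        rw [Finset.sum_eq_zero, mul_zero]
        intro φ _
        rcases eq_or_ne (σ φ) 0 with h0 | h0
        · rw [h0, zero_mul]
        · rw [hno φ h0, Nat.cast_zero, mul_zero]
      obtain ⟨φ, hσφ, hc⟩ := this
      apply hωfin φ hσφ
      rw [multinom]
      rw [Finset.prod_eq_zero (Finset.mem_univ x), mul_zero]
      rw [hωx]
      exact zero_pow hc
    nlinarith [hKpos]
  · simp only [klE]
    rw [if_neg hωfin]
    exact le_top
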